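/- Every multi-connected subset C of {-1,1}^d is lopsided. -/
import Mathlib


/-- Two vertices of the hypercube `{-1,1}^d` (encoded by `Bool`s) are adjacent
iff they differ in exactly one coordinate. -/
def cubeAdj {d : ℕ} (x y : Fin d → Bool) : Prop := ∃! i, x i ≠ y i

/-- The face of the hypercube with free coordinates `free`, the other coordinates
being fixed to the values of `x0`. -/
def cubeFace {d : ℕ} (free : Finset (Fin d)) (x0 : Fin d → Bool) : Set (Fin d → Bool) :=
  {x | ∀ i ∉ free, x i = x0 i}

/-- The vertices of `S` are pairwise connected by paths lying entirely inside `S`. -/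
def ConnIn {d : ℕ} (S : Set (Fin d → Bool)) : Prop :=
  ∀ x ∈ S, ∀ y ∈ S, Relation.ReflTransGen (fun a b => b ∈ S ∧ cubeAdj a b) x y

/-- Conditions (2) and (3) of multi-connectivity: for every face `F` of the hypercube,
both `C ∩ F` and `F \ C` are connected by edges of `F`. -/
def FaceConds {d : ℕ} (C : Set (Fin d → Bool)) : Prop :=
  ∀ (free : Finset (Fin d)) (x0 : Fin d → Bool),
    ConnIn (C ∩ cubeFace free x0) ∧ ConnIn (cubeFace free x0 \ C)

/-- `C ⊆ {-1,1}^d` is multi-connected: `C` is empty or some `g ∈ C` can be removed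
leaving a multi-connected set, and for every face `F` both `C ∩ F` and `F \ C` are
connected inside `F`. -/
inductive MultiConnected {d : ℕ} : Set (Fin d → Bool) → Prop
  | empty : FaceConds (∅ : Set (Fin d → Bool)) → MultiConnected ∅
  | step (C : Set (Fin d → Bool)) (g : Fin d → Bool) (hg : g ∈ C)
      (h : MultiConnected (C \ {g})) (hf : FaceConds C) : MultiConnected C

open Classical in
/-- The involution of the hypercube mapping each vertex of the face to its antipode
within the face, and fixing all vertices outside the face. -/
noncomputable def flipFace {d : ℕ} (free : Finset (Fin d)) (x0 : Fin d → Bool)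
    (x : Fin d → Bool) : Fin d → Bool :=
  if x ∈ cubeFace free x0 then (fun i => if i ∈ free then !(x i) else x i) else x

/-- `C ⊆ {-1,1}^d` is lopsided (totally asymmetric): whenever the antipodal involution
of a face preserves `C`, the face is fully contained in `C` or disjoint from `C`. -/
def Lopsided {d : ℕ} (C : Set (Fin d → Bool)) : Prop :=
  ∀ (free : Finset (Fin d)) (x0 : Fin d → Bool),
    flipFace free x0 '' C = C → (C ∩ cubeFace free x0 = ∅ ∨ cubeFace free x0 ⊆ C)

namespace MCAux


variable {d : ℕ}

/-- flipping one coordinate -/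
def flip (i : Fin d) (x : Fin d → Bool) : Fin d → Bool := Function.update x i (!(x i))

@[simp] lemma flip_same (i : Fin d) (x : Fin d → Bool) : flip i x i = !(x i) := by
  simp [flip]

lemma flip_ne_of_ne {i j : Fin d} (h : j ≠ i) (x : Fin d → Bool) : flip i x j = x j := by
  simp [flip, Function.update_of_ne h]

@[simp] lemma flip_flip (i : Fin d) (x : Fin d → Bool) : flip i (flip i x) = x := by
  funext j
  by_cases h : j = i
  · subst h; simp
  · rw [flip_ne_of_ne h, flip_ne_of_ne h]

lemma flip_ne (i : Fin d) (x : Fin d → Bool) : flip i x ≠ x := by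
  intro h
  have := congrFun h i
  simp at this

lemma flip_comm (i j : Fin d) (hij : i ≠ j) (x : Fin d → Bool) :
    flip i (flip j x) = flip j (flip i x) := by
  funext k
  by_cases hk : k = i
  · subst hk
    rw [flip_same, flip_ne_of_ne hij, flip_ne_of_ne hij, flip_same]
  · rw [flip_ne_of_ne hk]
    by_cases hk' : k = j
    · subst hk'; rw [flip_same, flip_same, flip_ne_of_ne hk]
    · rw [flip_ne_of_ne hk', flip_ne_of_ne hk', flip_ne_of_ne hk]

lemma cubeAdj_flip (i : Fin d) (x : Fin d → Bool) : cubeAdj x (flip i x) := by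
  refine ⟨i, by simp, ?_⟩
  intro j hj
  by_contra hne
  rw [flip_ne_of_ne hne] at hj
  exact hj rfl

lemma cubeAdj_symm {x y : Fin d → Bool} (h : cubeAdj x y) : cubeAdj y x := by
  obtain ⟨i, hi, hu⟩ := h
  exact ⟨i, fun h => hi h.symm, fun j hj => hu j fun h => hj h.symm⟩

lemma not_cubeAdj_self (x : Fin d → Bool) : ¬ cubeAdj x x := by
  rintro ⟨i, hi, -⟩; exact hi rfl

lemma eq_flip_of_cubeAdj {x y : Fin d → Bool} (h : cubeAdj x y) : ∃ i, y = flip i x := by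
  obtain ⟨i, hi, hu⟩ := h
  refine ⟨i, funext fun j => ?_⟩
  by_cases hj : j = i
  · subst hj
    rw [flip_same]
    revert hi; cases x j <;> cases y j <;> simp
  · rw [flip_ne_of_ne hj]
    by_contra hne
    exact hj (hu j fun h => hne h.symm)

lemma not_cubeAdj_of_two {x y : Fin d → Bool} {i j : Fin d} (hij : i ≠ j)
    (hi : x i ≠ y i) (hj : x j ≠ y j) : ¬ cubeAdj x y := by
  rintro ⟨k, -, hu⟩
  have h1 := hu i hi
  have h2 := hu j hj
  exact hij (h1.trans h2.symm)

/-! ### faces -/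

lemma self_mem_cubeFace (free : Finset (Fin d)) (x0 : Fin d → Bool) :
    x0 ∈ cubeFace free x0 := fun _ _ => rfl

lemma flip_mem_cubeFace {free : Finset (Fin d)} {x0 x : Fin d → Bool} {i : Fin d}
    (hi : i ∈ free) (hx : x ∈ cubeFace free x0) : flip i x ∈ cubeFace free x0 := by
  intro j hj
  have hji : j ≠ i := by rintro rfl; exact hj hi
  rw [flip_ne_of_ne hji]
  exact hx j hj

lemma cubeFace_subset {free free' : Finset (Fin d)} {x0 x0' : Fin d → Bool}
    (hf : free' ⊆ free) (hx : x0' ∈ cubeFace free x0) :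
    cubeFace free' x0' ⊆ cubeFace free x0 := by
  intro x hxm j hj
  rw [hxm j (fun h => hj (hf h))]
  exact hx j hj

lemma adj_mem_face {free : Finset (Fin d)} {x0 x z : Fin d → Bool}
    (hx : x ∈ cubeFace free x0) (hz : z ∈ cubeFace free x0) (h : cubeAdj x z) :
    ∃ j ∈ free, z = flip j x := by
  obtain ⟨j, hj⟩ := eq_flip_of_cubeAdj h
  refine ⟨j, ?_, hj⟩
  by_contra hjf
  have h1 := hx j hjf
  have h2 := hz j hjf
  rw [hj] at h2
  rw [flip_same] at h2
  rw [h1] at h2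
  simp at h2

/-! ### reachability -/

abbrev Reach (S : Set (Fin d → Bool)) (x y : Fin d → Bool) : Prop :=
  Relation.ReflTransGen (fun a b => b ∈ S ∧ cubeAdj a b) x y

lemma reach_mono {S T : Set (Fin d → Bool)} (hST : S ⊆ T) {x y : Fin d → Bool}
    (h : Reach S x y) : Reach T x y := by
  induction h with
  | refl => exact .refl
  | tail _ h2 ih => exact ih.tail ⟨hST h2.1, h2.2⟩

lemma mem_of_reach {S : Set (Fin d → Bool)} {x y : Fin d → Bool} (hx : x ∈ S)
    (h : Reach S x y) : y ∈ S := by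
  induction h with
  | refl => exact hx
  | tail _ h2 _ => exact h2.1

lemma reach_symm {S : Set (Fin d → Bool)} {x y : Fin d → Bool} (hx : x ∈ S)
    (h : Reach S x y) : Reach S y x := by
  induction h with
  | refl => exact .refl
  | tail h1 h2 ih =>
      exact Relation.ReflTransGen.head ⟨mem_of_reach hx h1, cubeAdj_symm h2.2⟩ ih

end MCAux

/-! ### ConnIn manipulation -/
namespace MCAux
variable {d : ℕ}

lemma connIn_of_reach {S : Set (Fin d → Bool)}
    (h : ∀ x ∈ S, ∀ y ∈ S, Reach S x y) : ConnIn S := h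

lemma connIn_insert {S : Set (Fin d → Bool)} {p : Fin d → Bool} (hS : ConnIn S)
    (hadj : S = ∅ ∨ ∃ q ∈ S, cubeAdj p q) : ConnIn (insert p S) := by
  have lift : ∀ x ∈ S, ∀ y ∈ S, Reach (insert p S) x y := fun x hx y hy =>
    reach_mono (Set.subset_insert p S) (hS x hx y hy)
  intro x hx y hy
  rcases hx with rfl | hx
  · rcases hy with rfl | hy
    · exact .refl
    · have hne : S ≠ ∅ := Set.nonempty_iff_ne_empty.1 ⟨y, hy⟩
      rcases hadj with h | ⟨q, hq, hadjq⟩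
      · exact absurd h hne
      · exact (Relation.ReflTransGen.single ⟨Set.mem_insert_iff.2 (Or.inr hq), hadjq⟩).trans
          (lift q hq y hy)
  · rcases hy with rfl | hy
    · have hne : S ≠ ∅ := Set.nonempty_iff_ne_empty.1 ⟨x, hx⟩
      rcases hadj with h | ⟨q, hq, hadjq⟩
      · exact absurd h hne
      · exact (lift x hx q hq).tail ⟨Set.mem_insert _ S, cubeAdj_symm hadjq⟩
    · exact lift x hx y hy

lemma connIn_diff_singleton {S : Set (Fin d → Bool)} {p : Fin d → Bool} (hS : ConnIn S)
    (bypass : ∀ q ∈ S, ∀ q' ∈ S, q ≠ p → q' ≠ p → cubeAdj p q → cubeAdj p q' →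
      Reach (S \ {p}) q q') : ConnIn (S \ {p}) := by
  intro x hx y hy
  have key : ∀ y, Reach S x y →
      (y ≠ p → y ∈ S → Reach (S \ {p}) x y) ∧
      (y = p → ∃ q ∈ S, q ≠ p ∧ cubeAdj q p ∧ Reach (S \ {p}) x q) := by
    intro y hxy
    induction hxy with
    | refl =>
        refine ⟨fun _ _ => .refl, fun h => absurd h hx.2⟩
    | @tail b c h1 h2 ih =>
        have hbS : b ∈ S := by
          rcases Relation.ReflTransGen.cases_tail h1 with h | ⟨u, _, hu⟩
          · exact h ▸ hx.1
          · exact hu.1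
        constructor
        · intro hcp hcS
          by_cases hbp : b = p
          · subst hbp
            obtain ⟨q, hqS, hqp, hadj, hreach⟩ := ih.2 rfl
            have := bypass q hqS c hcS hqp hcp (cubeAdj_symm hadj) h2.2
            exact hreach.trans this
          · exact (ih.1 hbp hbS).tail ⟨⟨hcS, hcp⟩, h2.2⟩
        · intro hcp
          have hbp : b ≠ p := by
            rintro rfl
            rw [hcp] at h2
            exact not_cubeAdj_self _ h2.2
          exact ⟨b, hbS, hbp, hcp ▸ h2.2, ih.1 hbp hbS⟩
  exact (key y (hS x hx.1 y hy.1)).1 hy.2 hy.1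

end MCAux
namespace MCAux
variable {d : ℕ}

lemma reach_first_step {S : Set (Fin d → Bool)} {x y : Fin d → Bool}
    (h : Reach S x y) (hne : x ≠ y) : ∃ z ∈ S, cubeAdj x z := by
  rcases Relation.ReflTransGen.cases_head h with h | ⟨z, hz, _⟩
  · exact absurd h hne
  · exact ⟨z, hz.1, hz.2⟩

lemma reach_trap {S T : Set (Fin d → Bool)} {x y : Fin d → Bool}
    (hclosed : ∀ t ∈ T, ∀ z ∈ S, cubeAdj t z → z ∈ T)
    (h : Reach S x y) (hx : x ∈ T) : y ∈ T := by
  induction h with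
  | refl => exact hx
  | tail _ h2 ih => exact hclosed _ ih _ h2.1 h2.2

/-! ### relative multiconnectedness -/

def FaceCondsIn (free : Finset (Fin d)) (x0 : Fin d → Bool) (D : Set (Fin d → Bool)) : Prop :=
  ∀ free' ⊆ free, ∀ x0' ∈ cubeFace free x0,
    ConnIn (D ∩ cubeFace free' x0') ∧ ConnIn (cubeFace free' x0' \ D)

inductive MCF (free : Finset (Fin d)) (x0 : Fin d → Bool) : Set (Fin d → Bool) → Prop
  | empty : FaceCondsIn free x0 ∅ → MCF free x0 ∅
  | step (D : Set (Fin d → Bool)) (g : Fin d → Bool) (hg : g ∈ D)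
      (hsub : D ⊆ cubeFace free x0) (h : MCF free x0 (D \ {g}))
      (hf : FaceCondsIn free x0 D) : MCF free x0 D

lemma MCF.faceConds {free : Finset (Fin d)} {x0 : Fin d → Bool} {D : Set (Fin d → Bool)}
    (h : MCF free x0 D) : FaceCondsIn free x0 D := by
  cases h with
  | empty hf => exact hf
  | step D g hg hsub h hf => exact hf

lemma MCF.subset {free : Finset (Fin d)} {x0 : Fin d → Bool} {D : Set (Fin d → Bool)}
    (h : MCF free x0 D) : D ⊆ cubeFace free x0 := by
  cases h with
  | empty hf => exact Set.empty_subset _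
  | step D g hg hsub h hf => exact hsub

lemma MCF.congr {free : Finset (Fin d)} {x0 : Fin d → Bool} {D D' : Set (Fin d → Bool)}
    (h : MCF free x0 D) (hDD : D = D') : MCF free x0 D' := hDD ▸ h

/-- restriction of a multiconnected set to a face -/
lemma multiConnected_restrict {C : Set (Fin d → Bool)} (hC : MultiConnected C)
    (free : Finset (Fin d)) (x0 : Fin d → Bool) :
    MCF free x0 (C ∩ cubeFace free x0) := by
  induction hC with
  | empty hf =>
      refine (MCF.empty ?_).congr (by simp)
      intro free' hfree' x0' hx0'
      refine ⟨?_, ?_⟩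
      · intro x hx; exact absurd hx.1 (Set.notMem_empty x)
      · have := (hf free' x0').2
        simpa using this
  | @step C g hg h hf ih =>
      by_cases hgF : g ∈ cubeFace free x0
      · refine MCF.step _ g ⟨hg, hgF⟩ Set.inter_subset_right (ih.congr ?_) ?_
        · ext x
          simp only [Set.mem_inter_iff, Set.mem_diff, Set.mem_singleton_iff]
          tauto
        · intro free' hfree' x0' hx0'
          have hsub' : cubeFace free' x0' ⊆ cubeFace free x0 := cubeFace_subset hfree' hx0'
          have e1 : (C ∩ cubeFace free x0) ∩ cubeFace free' x0' = C ∩ cubeFace free' x0' := by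
            ext x
            simp only [Set.mem_inter_iff]
            exact ⟨fun h => ⟨h.1.1, h.2⟩, fun h => ⟨⟨h.1, hsub' h.2⟩, h.2⟩⟩
          have e2 : cubeFace free' x0' \ (C ∩ cubeFace free x0) = cubeFace free' x0' \ C := by
            ext x
            simp only [Set.mem_diff, Set.mem_inter_iff]
            exact ⟨fun h => ⟨h.1, fun hc => h.2 ⟨hc, hsub' h.1⟩⟩, fun h => ⟨h.1, fun hc => h.2 hc.1⟩⟩
          rw [e1, e2]
          exact ⟨(hf free' x0').1, (hf free' x0').2⟩
      · refine ih.congr ?_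
        ext x
        simp only [Set.mem_inter_iff, Set.mem_diff, Set.mem_singleton_iff]
        constructor
        · rintro ⟨⟨hxC, hxg⟩, hxF⟩; exact ⟨hxC, hxF⟩
        · rintro ⟨hxC, hxF⟩
          exact ⟨⟨hxC, fun h => hgF (h ▸ hxF)⟩, hxF⟩

end MCAux
namespace MCAux
variable {d : ℕ}

lemma ne_of_coord {x y : Fin d → Bool} (j : Fin d) (h : x j ≠ y j) : x ≠ y :=
  fun he => h (congrFun he j)

section threeFace

variable {free : Finset (Fin d)} {x0 g : Fin d → Bool} {D : Set (Fin d → Bool)}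
    {i j j' : Fin d}

/-- the square-of-pairs separation lemma -/
lemma squareB
    (hfD : FaceCondsIn free x0 D) (hgF : g ∈ cubeFace free x0)
    (hi : i ∈ free) (hj : j ∈ free) (hj' : j' ∈ free)
    (hji : j ≠ i) (hj'i : j' ≠ i) (hjj' : j ≠ j')
    (hgD : g ∈ D) (hg2 : flip i g ∈ D)
    (hq : flip j g ∉ D ∨ flip i (flip j g) ∉ D)
    (hq' : flip j' g ∉ D ∨ flip i (flip j' g) ∉ D)
    (hs0 : flip j (flip j' g) ∈ D) (hs1 : flip i (flip j (flip j' g)) ∈ D) : False := by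
  classical
  set S3 : Finset (Fin d) := insert i (insert j {j'}) with hS3
  have hS3sub : S3 ⊆ free := by
    rw [hS3]
    refine Finset.insert_subset hi (Finset.insert_subset hj ?_)
    simpa using hj'
  have hiS : i ∈ S3 := by simp [hS3]
  have hjS : j ∈ S3 := by simp [hS3]
  have hj'S : j' ∈ S3 := by simp [hS3]
  have hgS : g ∈ cubeFace S3 g := self_mem_cubeFace _ _
  have hq0S : flip j g ∈ cubeFace S3 g := flip_mem_cubeFace hjS hgS
  have hq1S : flip i (flip j g) ∈ cubeFace S3 g := flip_mem_cubeFace hiS hq0S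
  have hr0S : flip j' g ∈ cubeFace S3 g := flip_mem_cubeFace hj'S hgS
  have hr1S : flip i (flip j' g) ∈ cubeFace S3 g := flip_mem_cubeFace hiS hr0S
  have hconn := (hfD S3 hS3sub g hgF).2
  set T : Set (Fin d → Bool) := {flip j g, flip i (flip j g)} with hT
  have trap : ∀ t ∈ T, ∀ z ∈ (cubeFace S3 g \ D), cubeAdj t z → z ∈ T := by
    intro t ht z hz hadj
    have htS : t ∈ cubeFace S3 g := by
      rcases ht with rfl | rfl
      · exact hq0S
      · exact hq1S
    obtain ⟨k, hk, rfl⟩ := adj_mem_face htS hz.1 hadj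
    have hk3 : k = i ∨ k = j ∨ k = j' := by
      simpa [hS3] using hk
    rcases ht with rfl | rfl
    · rcases hk3 with rfl | rfl | rfl
      · exact Or.inr rfl
      · exact absurd (show flip k (flip k g) ∈ D by rw [flip_flip]; exact hgD) hz.2
      · exact absurd (show flip k (flip j g) ∈ D by
          rw [flip_comm k j (fun h => hjj' h.symm)]; exact hs0) hz.2
    · rcases hk3 with rfl | rfl | rfl
      · exact Or.inl (by rw [flip_flip])
      · exact absurd (show flip k (flip i (flip k g)) ∈ D by
          rw [flip_comm k i hji, flip_flip]; exact hg2) hz.2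
      · exact absurd (show flip k (flip i (flip j g)) ∈ D by
          rw [flip_comm k i hj'i, flip_comm k j (fun h => hjj' h.symm)]; exact hs1) hz.2
  obtain ⟨αv, hαm, hαD⟩ : ∃ a, (a = flip j g ∨ a = flip i (flip j g)) ∧ a ∉ D := by
    rcases hq with h | h
    · exact ⟨_, Or.inl rfl, h⟩
    · exact ⟨_, Or.inr rfl, h⟩
  obtain ⟨βv, hβm, hβD⟩ : ∃ a, (a = flip j' g ∨ a = flip i (flip j' g)) ∧ a ∉ D := by
    rcases hq' with h | h
    · exact ⟨_, Or.inl rfl, h⟩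
    · exact ⟨_, Or.inr rfl, h⟩
  have hαS : αv ∈ cubeFace S3 g := by rcases hαm with rfl | rfl; exacts [hq0S, hq1S]
  have hβS : βv ∈ cubeFace S3 g := by rcases hβm with rfl | rfl; exacts [hr0S, hr1S]
  have hαT : αv ∈ T := by rcases hαm with rfl | rfl; exacts [Or.inl rfl, Or.inr rfl]
  have hreach : Reach (cubeFace S3 g \ D) αv βv := hconn αv ⟨hαS, hαD⟩ βv ⟨hβS, hβD⟩
  have hβT : βv ∈ T := reach_trap trap hreach hαT
  have hβj : βv j = g j := by
    rcases hβm with rfl | rfl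
    · exact flip_ne_of_ne hjj' g
    · rw [flip_ne_of_ne hji, flip_ne_of_ne hjj']
  have hβj' : βv j = !(g j) := by
    rcases hβT with h | h
    · rw [h, flip_same]
    · rw [h, flip_ne_of_ne hji, flip_same]
  rw [hβj] at hβj'
  exact (Bool.self_ne_not (g j)) hβj'

end threeFace
end MCAux
namespace MCAux
variable {d : ℕ}

/-- the attachment lemma: if `D` and `D \ {g}` satisfy the face conditions,
`{g, flip i g} ⊆ D` and `{y, flip i y} ⊆ D \ {g}` is another `i`-pair
(with `y` on the same side as `g`), then some `i`-pair of `D` is adjacent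
to the pair of `g`, in a direction where `g` and `y` differ. -/
lemma attach {free : Finset (Fin d)} {x0 g : Fin d → Bool} {D : Set (Fin d → Bool)}
    {i : Fin d}
    (hfD : FaceCondsIn free x0 D) (hfD' : FaceCondsIn free x0 (D \ {g}))
    (hsub : D ⊆ cubeFace free x0) (hi : i ∈ free)
    (hgD : g ∈ D) (hg2 : flip i g ∈ D)
    {y : Fin d → Bool} (hy : y ∈ D) (hy2 : flip i y ∈ D) (hyg : y ≠ g)
    (hy2g : flip i y ≠ g) (hyi : y i = g i) :
    ∃ j, j ≠ i ∧ g j ≠ y j ∧ flip j g ∈ D ∧ flip j (flip i g) ∈ D := by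
  classical
  set Δ : Finset (Fin d) := Finset.univ.filter (fun j => g j ≠ y j) with hΔ
  have hΔsub : Δ ⊆ free := by
    intro j hj
    rw [hΔ, Finset.mem_filter] at hj
    by_contra hjf
    exact hj.2 (((hsub hgD) j hjf).trans ((hsub hy) j hjf).symm)
  have hiΔ : i ∉ Δ := by
    rw [hΔ, Finset.mem_filter]
    push_neg
    intro _
    exact hyi.symm
  have hyΔ : y ∈ cubeFace Δ g := by
    intro j hj
    rw [hΔ, Finset.mem_filter] at hj
    push_neg at hj
    exact (hj (Finset.mem_univ j)).symm
  -- step 1 : a neighbour of `g` in `D ∩ [g,y]`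
  have hgΔ : g ∈ cubeFace Δ g := self_mem_cubeFace _ _
  have hconn1 := (hfD Δ hΔsub g (hsub hgD)).1
  have hreach1 := hconn1 g ⟨hgD, hgΔ⟩ y ⟨hy, hyΔ⟩
  obtain ⟨z, hzm, hzadj⟩ := reach_first_step hreach1 (Ne.symm hyg)
  obtain ⟨j', hj'Δ, rfl⟩ := adj_mem_face hgΔ hzm.2 hzadj
  have hj'i : j' ≠ i := fun h => hiΔ (h ▸ hj'Δ)
  have hgyj' : g j' ≠ y j' := by
    rw [hΔ, Finset.mem_filter] at hj'Δ
    exact hj'Δ.2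
  by_cases hc1 : flip i (flip j' g) ∈ D
  · refine ⟨j', hj'i, hgyj', hzm.1, ?_⟩
    rw [← flip_comm i j' (Ne.symm hj'i)]
    exact hc1
  -- step 2 : a neighbour of `flip i g` in `(D \ {g}) ∩ [flip i g, flip i y]`
  have hgF : flip i g ∈ cubeFace free x0 := flip_mem_cubeFace hi (hsub hgD)
  have hg2m : flip i g ∈ (D \ {g}) ∩ cubeFace Δ (flip i g) :=
    ⟨⟨hg2, by simpa using flip_ne i g⟩, self_mem_cubeFace _ _⟩
  have hy2m : flip i y ∈ (D \ {g}) ∩ cubeFace Δ (flip i g) := by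
    refine ⟨⟨hy2, by simpa using hy2g⟩, ?_⟩
    intro j hj
    by_cases hji : j = i
    · subst hji
      rw [flip_same, flip_same, hyi]
    · rw [flip_ne_of_ne hji, flip_ne_of_ne hji]
      rw [hΔ, Finset.mem_filter] at hj
      push_neg at hj
      exact (hj (Finset.mem_univ j)).symm
  have hneq2 : flip i g ≠ flip i y := by
    intro h
    have h2 := congrArg (flip i) h
    rw [flip_flip, flip_flip] at h2
    exact hyg h2.symm
  have hconn2 := (hfD' Δ hΔsub (flip i g) hgF).1
  obtain ⟨u, hum, huadj⟩ :=
    reach_first_step (hconn2 _ hg2m _ hy2m) hneq2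
  obtain ⟨jj, hjjΔ, rfl⟩ := adj_mem_face (self_mem_cubeFace _ _) hum.2 huadj
  have hjji : jj ≠ i := fun h => hiΔ (h ▸ hjjΔ)
  have hgyjj : g jj ≠ y jj := by
    rw [hΔ, Finset.mem_filter] at hjjΔ
    exact hjjΔ.2
  by_cases hc2 : flip jj g ∈ D
  · exact ⟨jj, hjji, hgyjj, hc2, hum.1.1⟩
  -- step 3 : the two directions are distinct
  have hjjj' : jj ≠ j' := fun h => hc2 (h ▸ hzm.1)
  -- step 4 : the 3-face argument
  exfalso
  set S3 : Finset (Fin d) := insert i (insert jj {j'}) with hS3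
  have hS3sub : S3 ⊆ free := by
    rw [hS3]
    refine Finset.insert_subset hi (Finset.insert_subset (hΔsub hjjΔ) ?_)
    simpa using hΔsub hj'Δ
  have hiS : i ∈ S3 := by simp [hS3]
  have hjjS : jj ∈ S3 := by simp [hS3]
  have hj'S : j' ∈ S3 := by simp [hS3]
  have hgS : g ∈ cubeFace S3 g := self_mem_cubeFace _ _
  have hvS : flip j' g ∈ cubeFace S3 g := flip_mem_cubeFace hj'S hgS
  have hwS : flip jj (flip j' g) ∈ cubeFace S3 g := flip_mem_cubeFace hjjS hvS
  have hg2S : flip i g ∈ cubeFace S3 g := flip_mem_cubeFace hiS hgS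
  have hvm : flip j' g ∈ (D \ {g}) ∩ cubeFace S3 g := by
    refine ⟨⟨hzm.1, ?_⟩, hvS⟩
    simp only [Set.mem_singleton_iff]
    exact ne_of_coord j' (by rw [flip_same]; exact Bool.not_ne_self _)
  have hg2m3 : flip i g ∈ (D \ {g}) ∩ cubeFace S3 g :=
    ⟨⟨hg2, by simpa using flip_ne i g⟩, hg2S⟩
  have hconn3 := (hfD' S3 hS3sub g (hsub hgD)).1
  have hg2v : flip i g ≠ flip j' g :=
    ne_of_coord i (by rw [flip_same, flip_ne_of_ne (Ne.symm hj'i)]; exact Bool.not_ne_self _)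
  -- the diagonal pair is in D
  have hw : flip jj (flip j' g) ∈ D \ {g} := by
    by_contra hwc
    have trap : ∀ t ∈ ({flip j' g} : Set (Fin d → Bool)),
        ∀ zz ∈ ((D \ {g}) ∩ cubeFace S3 g), cubeAdj t zz →
        zz ∈ ({flip j' g} : Set (Fin d → Bool)) := by
      intro t ht zz hzz hadj
      rw [Set.mem_singleton_iff] at ht
      subst ht
      obtain ⟨k, hk, rfl⟩ := adj_mem_face hvS hzz.2 hadj
      have hk3 : k = i ∨ k = jj ∨ k = j' := by simpa [hS3] using hk
      rcases hk3 with rfl | rfl | rfl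
      · exact absurd hzz.1.1 hc1
      · exact absurd hzz.1 hwc
      · refine absurd hzz.1.2 ?_
        simp only [Set.mem_singleton_iff, not_not]
        rw [flip_flip]
    have := reach_trap trap (hconn3 _ hvm _ hg2m3) rfl
    rw [Set.mem_singleton_iff] at this
    exact hg2v this
  have hw2 : flip i (flip jj (flip j' g)) ∈ D := by
    by_contra hwc2
    have trap : ∀ t ∈ ({flip j' g, flip jj (flip j' g)} : Set (Fin d → Bool)),
        ∀ zz ∈ ((D \ {g}) ∩ cubeFace S3 g), cubeAdj t zz →
        zz ∈ ({flip j' g, flip jj (flip j' g)} : Set (Fin d → Bool)) := by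
      intro t ht zz hzz hadj
      rcases ht with rfl | rfl
      · obtain ⟨k, hk, rfl⟩ := adj_mem_face hvS hzz.2 hadj
        have hk3 : k = i ∨ k = jj ∨ k = j' := by simpa [hS3] using hk
        rcases hk3 with rfl | rfl | rfl
        · exact absurd hzz.1.1 hc1
        · exact Or.inr rfl
        · refine absurd hzz.1.2 ?_
          simp only [Set.mem_singleton_iff, not_not]
          rw [flip_flip]
      · obtain ⟨k, hk, rfl⟩ := adj_mem_face hwS hzz.2 hadj
        have hk3 : k = i ∨ k = jj ∨ k = j' := by simpa [hS3] using hk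
        rcases hk3 with rfl | rfl | rfl
        · exact absurd hzz.1.1 hwc2
        · exact Or.inl (by rw [flip_flip])
        · refine absurd hzz.1.1 ?_
          rw [flip_comm k jj (Ne.symm hjjj'), flip_flip]
          exact hc2
    have := reach_trap trap (hconn3 _ hvm _ hg2m3) (Or.inl rfl)
    rcases this with h | h
    · exact hg2v h
    · refine ne_of_coord i ?_ h
      rw [flip_same, flip_ne_of_ne (Ne.symm hjji), flip_ne_of_ne (Ne.symm hj'i)]
      exact Bool.not_ne_self _
  exact squareB hfD (hsub hgD) hi (hΔsub hjjΔ) (hΔsub hj'Δ) hjji hj'i hjjj'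
    hgD hg2 (Or.inl hc2) (Or.inr hc1) hw.1 hw2

end MCAux
namespace MCAux
variable {d : ℕ}

/-- the set of `i`-pairs of `D`, as a subset of the lower half-face -/
def pairSet (i : Fin d) (free : Finset (Fin d)) (x0 : Fin d → Bool)
    (D : Set (Fin d → Bool)) : Set (Fin d → Bool) :=
  {x | x ∈ cubeFace (free.erase i) x0 ∧ x ∈ D ∧ flip i x ∈ D}

lemma mcf_pairSet {free : Finset (Fin d)} {x0 : Fin d → Bool} {D : Set (Fin d → Bool)}
    {i : Fin d} (h : MCF free x0 D) (hi : i ∈ free) :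
    MCF (free.erase i) x0 (pairSet i free x0 D) := by
  classical
  induction h with
  | empty hf =>
      refine (MCF.empty ?_).congr ?_
      · intro free'' hfree'' x0'' hx0''
        have hx0''F : x0'' ∈ cubeFace free x0 :=
          cubeFace_subset (Finset.erase_subset i free) (self_mem_cubeFace _ _) hx0''
        refine ⟨?_, ?_⟩
        · intro x hx
          exact absurd hx.1 (Set.notMem_empty x)
        · have := (hf free'' (hfree''.trans (Finset.erase_subset i free)) x0'' hx0''F).2
          exact this
      · ext x
        simp [pairSet]
  | @step D g hg hsub h hf ih =>
      set E' := pairSet i free x0 (D \ {g}) with hE'def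
      set E := pairSet i free x0 D with hEdef
      by_cases hgs : flip i g ∈ D
      · -- `g` is part of a pair; the pair is added to the pair set
        set p : Fin d → Bool := if g i = x0 i then g else flip i g with hpdef
        have hpair : (p = g ∧ flip i p = flip i g) ∨ (p = flip i g ∧ flip i p = g) := by
          by_cases hgi : g i = x0 i
          · exact Or.inl ⟨by rw [hpdef, if_pos hgi], by rw [hpdef, if_pos hgi]⟩
          · exact Or.inr ⟨by rw [hpdef, if_neg hgi], by rw [hpdef, if_neg hgi, flip_flip]⟩
        have hpD : p ∈ D := by
          rcases hpair with ⟨h1, _⟩ | ⟨h1, _⟩ <;> rw [h1]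
          exacts [hg, hgs]
        have hpD2 : flip i p ∈ D := by
          rcases hpair with ⟨_, h2⟩ | ⟨_, h2⟩ <;> rw [h2]
          exacts [hgs, hg]
        have hpi : p i = x0 i := by
          by_cases hgi : g i = x0 i
          · rw [hpdef, if_pos hgi]; exact hgi
          · rw [hpdef, if_neg hgi, flip_same]
            revert hgi
            cases g i <;> cases x0 i <;> simp
        have hpF' : p ∈ cubeFace (free.erase i) x0 := by
          intro j hj
          by_cases hji : j = i
          · subst hji; exact hpi
          · have hjf : j ∉ free := by
              intro hjfree
              exact hj (Finset.mem_erase.mpr ⟨hji, hjfree⟩)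
            have hpj : p j = g j := by
              rcases hpair with ⟨h1, _⟩ | ⟨h1, _⟩
              · rw [h1]
              · rw [h1]; exact flip_ne_of_ne hji g
            rw [hpj]
            exact (hsub hg) j hjf
        have hpE : p ∈ E := ⟨hpF', hpD, hpD2⟩
        have hpE' : p ∉ E' := by
          intro hpe
          rcases hpair with ⟨h1, _⟩ | ⟨_, h2⟩
          · exact hpe.2.1.2 (by rw [h1]; rfl)
          · exact hpe.2.2.2 (by rw [h2]; rfl)
        have hgqne : ∀ j, j ≠ i → flip j p ≠ g ∧ flip i (flip j p) ≠ g := by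
          intro j hji
          rcases hpair with ⟨h1, _⟩ | ⟨h1, _⟩ <;> rw [h1]
          · constructor
            · exact ne_of_coord j (by rw [flip_same]; exact Bool.not_ne_self _)
            · exact ne_of_coord j
                (by rw [flip_ne_of_ne hji, flip_same]; exact Bool.not_ne_self _)
          · constructor
            · exact ne_of_coord i (by
                rw [flip_ne_of_ne (fun hh => hji hh.symm), flip_same]
                exact Bool.not_ne_self _)
            · exact ne_of_coord j (by
                rw [flip_ne_of_ne hji, flip_same, flip_ne_of_ne hji]
                exact Bool.not_ne_self _)
        have hEE : E = insert p E' := by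
          ext x
          constructor
          · rintro ⟨hxf, hxD, hxD2⟩
            by_cases hxg : x = g ∨ flip i x = g
            · left
              have hxi : x i = x0 i := by
                have : i ∉ free.erase i := by simp
                exact hxf i this
              by_cases hgi : g i = x0 i
              · rcases hxg with rfl | hxg
                · rw [hpdef, if_pos hgi]
                · exfalso
                  have : x i = !(g i) := by
                    have := congrArg (flip i) hxg
                    rw [flip_flip] at this
                    rw [this, flip_same]
                  rw [hxi, hgi] at this
                  exact Bool.self_ne_not _ this
              · rcases hxg with rfl | hxg
                · exact absurd hxi hgi
                · have : x = flip i g := by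
                    have := congrArg (flip i) hxg
                    rw [flip_flip] at this
                    rw [this]
                  rw [hpdef, if_neg hgi, ← this]
            · push_neg at hxg
              exact Or.inr ⟨hxf, ⟨hxD, hxg.1⟩, ⟨hxD2, hxg.2⟩⟩
          · rintro (rfl | hx)
            · exact hpE
            · exact ⟨hx.1, hx.2.1.1, hx.2.2.1⟩
        have hE'eq : E \ {p} = E' := by
          rw [hEE]
          ext x
          simp only [Set.mem_diff, Set.mem_insert_iff, Set.mem_singleton_iff]
          constructor
          · rintro ⟨rfl | hx, hne⟩
            · exact absurd rfl hne
            · exact hx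
          · intro hx
            exact ⟨Or.inr hx, fun he => hpE' (he ▸ hx)⟩
        refine MCF.step E p hpE (fun x hx => hx.1) (ih.congr hE'eq.symm) ?_
        -- the face conditions for `E`
        intro free'' hfree'' x0'' hx0''
        have hfree''free : free'' ⊆ free := hfree''.trans (Finset.erase_subset i free)
        have hx0''F : x0'' ∈ cubeFace free x0 :=
          cubeFace_subset (Finset.erase_subset i free) (self_mem_cubeFace _ _) hx0''
        have hE'f := ih.faceConds free'' hfree'' x0'' hx0''
        have hfD' := h.faceConds
        have hpF : p ∈ cubeFace free x0 :=
          cubeFace_subset (Finset.erase_subset i free) (self_mem_cubeFace _ _) hpF'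
        have hinotin : ∀ j, j ∈ free'' → j ≠ i := by
          intro j hj
          exact (Finset.mem_erase.mp (hfree'' hj)).1
        by_cases hpF'' : p ∈ cubeFace free'' x0''
        · constructor
          · -- ConnIn (E ∩ F'')
            have heq : E ∩ cubeFace free'' x0'' = insert p (E' ∩ cubeFace free'' x0'') := by
              rw [hEE, Set.insert_inter_of_mem hpF'']
            rw [heq]
            refine connIn_insert hE'f.1 ?_
            rcases Set.eq_empty_or_nonempty (E' ∩ cubeFace free'' x0'') with he | ⟨q0, hq0⟩
            · exact Or.inl he
            right
            obtain ⟨⟨hq0f, hq0D, hq0D2⟩, hq0F''⟩ := hq0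
            have hq0i : q0 i = x0 i := hq0f i (by simp)
            -- find a pair adjacent to the pair of `p`
            have key : ∃ j, j ≠ i ∧ p j ≠ q0 j ∧ flip j p ∈ D ∧ flip i (flip j p) ∈ D := by
              rcases hpair with ⟨hp1, hp2⟩ | ⟨hp1, hp2⟩
              · -- p = g
                have hyi : q0 i = g i := by rw [hq0i, ← hpi, hp1]
                obtain ⟨j, hji, hgy, hd1, hd2⟩ :=
                  attach hf hfD' hsub hi hg hgs hq0D.1 hq0D2.1 hq0D.2 hq0D2.2 hyi
                refine ⟨j, hji, by rw [hp1]; exact hgy, by rw [hp1]; exact hd1, ?_⟩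
                rw [hp1, flip_comm i j (Ne.symm hji)]
                · exact hd2
              · -- p = flip i g
                have hyi : flip i q0 i = g i := by
                  rw [flip_same, hq0i]
                  have : p i = !(g i) := by rw [hp1, flip_same]
                  rw [hpi] at this
                  rw [this, Bool.not_not]
                obtain ⟨j, hji, hgy, hd1, hd2⟩ :=
                  attach hf hfD' hsub hi hg hgs hq0D2.1
                    (by rw [flip_flip]; exact hq0D.1) hq0D2.2
                    (by rw [flip_flip]; exact hq0D.2) hyi
                refine ⟨j, hji, ?_, ?_, ?_⟩
                · rw [hp1, flip_ne_of_ne hji]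
                  rw [flip_ne_of_ne hji] at hgy
                  exact hgy
                · rw [hp1]; exact hd2
                · rw [hp1, flip_comm i j (fun hh => hji hh.symm), flip_flip]
                  exact hd1
            obtain ⟨j, hji, hpq0j, hd1, hd2⟩ := key
            have hjf'' : j ∈ free'' := by
              by_contra hjf
              exact hpq0j ((hpF'' j hjf).trans (hq0F'' j hjf).symm)
            have hnes := hgqne j hji
            refine ⟨flip j p, ⟨⟨flip_mem_cubeFace (hfree'' hjf'') hpF', ⟨hd1, hnes.1⟩,
              ⟨hd2, hnes.2⟩⟩, flip_mem_cubeFace hjf'' hpF''⟩, cubeAdj_flip j p⟩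
          · -- ConnIn (F'' \ E)
            have heq : cubeFace free'' x0'' \ E =
                (cubeFace free'' x0'' \ E') \ {p} := by
              rw [hEE]
              ext x
              simp only [Set.mem_diff, Set.mem_insert_iff, Set.mem_singleton_iff]
              tauto
            rw [heq]
            refine connIn_diff_singleton hE'f.2 ?_
            intro q hq q' hq' hqp hq'p hadjq hadjq'
            obtain ⟨j, hjf'', rfl⟩ := adj_mem_face hpF'' hq.1 hadjq
            obtain ⟨j', hj'f'', rfl⟩ := adj_mem_face hpF'' hq'.1 hadjq'
            have hji : j ≠ i := hinotin j hjf''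
            have hj'i : j' ≠ i := hinotin j' hj'f''
            by_cases hjj' : j = j'
            · subst hjj'
              exact Relation.ReflTransGen.refl
            -- the two non-pairs are distinct
            have hnotpairq : flip j p ∉ D ∨ flip i (flip j p) ∉ D := by
              have hqE' : flip j p ∉ E' := hq.2
              have hqface : flip j p ∈ cubeFace (free.erase i) x0 :=
                flip_mem_cubeFace (hfree'' hjf'') hpF'
              by_contra hcon
              push_neg at hcon
              exact hqE' ⟨hqface, ⟨hcon.1, (hgqne j hji).1⟩, ⟨hcon.2, (hgqne j hji).2⟩⟩
            have hnotpairq' : flip j' p ∉ D ∨ flip i (flip j' p) ∉ D := by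
              have hqE' : flip j' p ∉ E' := hq'.2
              have hqface : flip j' p ∈ cubeFace (free.erase i) x0 :=
                flip_mem_cubeFace (hfree'' hj'f'') hpF'
              by_contra hcon
              push_neg at hcon
              exact hqE' ⟨hqface, ⟨hcon.1, (hgqne j' hj'i).1⟩, ⟨hcon.2, (hgqne j' hj'i).2⟩⟩
            -- the diagonal is a non-pair as well
            have hsnotpair : flip j' (flip j p) ∉ D ∨ flip i (flip j' (flip j p)) ∉ D := by
              by_contra hcon
              push_neg at hcon
              refine squareB hf hpF hi (hfree''free hjf'') (hfree''free hj'f'')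
                hji hj'i hjj' hpD hpD2 hnotpairq hnotpairq' ?_ ?_
              · rw [flip_comm j j' hjj']; exact hcon.1
              · rw [flip_comm j j' hjj']; exact hcon.2
            have hsface : flip j' (flip j p) ∈ cubeFace (free.erase i) x0 :=
              flip_mem_cubeFace (hfree'' hj'f'') (flip_mem_cubeFace (hfree'' hjf'') hpF')
            have hsE' : flip j' (flip j p) ∉ E' := by
              intro hsE
              rcases hsnotpair with hcon | hcon
              · exact hcon hsE.2.1.1
              · exact hcon hsE.2.2.1
            have hsF'' : flip j' (flip j p) ∈ cubeFace free'' x0'' :=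
              flip_mem_cubeFace hj'f'' (flip_mem_cubeFace hjf'' hpF'')
            have hsp : flip j' (flip j p) ≠ p := by
              refine ne_of_coord j ?_
              rw [flip_ne_of_ne hjj', flip_same]
              exact Bool.not_ne_self _
            have hstep1 : flip j' (flip j p) ∈
                (cubeFace free'' x0'' \ E') \ {p} := ⟨⟨hsF'', hsE'⟩, hsp⟩
            have hstep2 : flip j' p ∈ (cubeFace free'' x0'' \ E') \ {p} :=
              ⟨⟨hq'.1, hq'.2⟩, hq'p⟩
            have hadj2 : cubeAdj (flip j' (flip j p)) (flip j' p) := by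
              have : flip j' p = flip j (flip j' (flip j p)) := by
                rw [flip_comm j' j (fun hh => hjj' hh.symm), flip_flip]
              rw [this]
              exact cubeAdj_flip _ _
            exact Relation.ReflTransGen.head ⟨hstep1, cubeAdj_flip j' (flip j p)⟩
              (Relation.ReflTransGen.single ⟨hstep2, hadj2⟩)
        · -- `p` is not in the face : nothing changes
          constructor
          · have heq : E ∩ cubeFace free'' x0'' = E' ∩ cubeFace free'' x0'' := by
              rw [hEE]
              ext x
              simp only [Set.mem_inter_iff, Set.mem_insert_iff]
              constructor
              · rintro ⟨rfl | hx, hxF⟩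
                · exact absurd hxF hpF''
                · exact ⟨hx, hxF⟩
              · rintro ⟨hx, hxF⟩
                exact ⟨Or.inr hx, hxF⟩
            rw [heq]
            exact hE'f.1
          · have heq : cubeFace free'' x0'' \ E = cubeFace free'' x0'' \ E' := by
              rw [hEE]
              ext x
              simp only [Set.mem_diff, Set.mem_insert_iff]
              constructor
              · rintro ⟨hxF, hx⟩
                exact ⟨hxF, fun hxe => hx (Or.inr hxe)⟩
              · rintro ⟨hxF, hx⟩
                refine ⟨hxF, ?_⟩
                rintro (rfl | hxe)
                · exact hpF'' hxF
                · exact hx hxe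
            rw [heq]
            exact hE'f.2
      · -- `g` is not part of a pair : the pair set is unchanged
        have hEE : E = E' := by
          ext x
          constructor
          · rintro ⟨hxf, hxD, hxD2⟩
            have hxg : x ≠ g := by
              rintro rfl
              exact hgs hxD2
            have hxg2 : flip i x ≠ g := by
              intro hh
              have := congrArg (flip i) hh
              rw [flip_flip] at this
              rw [this] at hxD
              exact hgs hxD
            exact ⟨hxf, ⟨hxD, hxg⟩, ⟨hxD2, hxg2⟩⟩
          · rintro ⟨hxf, hxD, hxD2⟩
            exact ⟨hxf, hxD.1, hxD2.1⟩
        exact ih.congr hEE.symm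

end MCAux
namespace MCAux
variable {d : ℕ}

lemma flipFace_apply {free : Finset (Fin d)} {x0 x : Fin d → Bool}
    (hx : x ∈ cubeFace free x0) :
    flipFace free x0 x = fun j => if j ∈ free then !(x j) else x j := by
  rw [flipFace, if_pos hx]

lemma flipFace_mem {free : Finset (Fin d)} {x0 x : Fin d → Bool}
    (hx : x ∈ cubeFace free x0) : flipFace free x0 x ∈ cubeFace free x0 := by
  intro j hj
  rw [flipFace_apply hx]
  simp only [if_neg hj]
  exact hx j hj

lemma flipFace_flipFace {free : Finset (Fin d)} {x0 x : Fin d → Bool}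
    (hx : x ∈ cubeFace free x0) : flipFace free x0 (flipFace free x0 x) = x := by
  rw [flipFace_apply (flipFace_mem hx), flipFace_apply hx]
  funext j
  by_cases hj : j ∈ free <;> simp [hj]

lemma flipFace_apply_mem {free : Finset (Fin d)} {x0 x : Fin d → Bool} {j : Fin d}
    (hx : x ∈ cubeFace free x0) (hj : j ∈ free) : flipFace free x0 x j = !(x j) := by
  rw [flipFace_apply hx]
  simp [hj]

/-- a multiconnected subset of a face invariant under the antipodal map of the
face is empty or the whole face -/
lemma mcf_symm_trivial : ∀ (n : ℕ) (free : Finset (Fin d)), free.card ≤ n →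
    ∀ (x0 : Fin d → Bool) (D : Set (Fin d → Bool)), MCF free x0 D →
    flipFace free x0 '' D = D → D = ∅ ∨ D = cubeFace free x0 := by
  have base : ∀ (x0 : Fin d → Bool) (D : Set (Fin d → Bool)),
      D ⊆ cubeFace (∅ : Finset (Fin d)) x0 → D.Nonempty →
      D = cubeFace (∅ : Finset (Fin d)) x0 := by
    intro x0 D hsub ⟨d0, hd0⟩
    have hF : ∀ y ∈ cubeFace (∅ : Finset (Fin d)) x0, y = x0 := by
      intro y hy
      funext j
      exact hy j (Finset.notMem_empty j)
    apply Set.Subset.antisymm hsub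
    intro y hy
    rw [hF y hy, ← hF d0 (hsub hd0)]
    exact hd0
  intro n
  induction n with
  | zero =>
      intro free hcard x0 D h hsym
      have hfree : free = ∅ := Finset.card_eq_zero.mp (Nat.le_zero.mp hcard)
      subst hfree
      rcases Set.eq_empty_or_nonempty D with rfl | hne
      · exact Or.inl rfl
      · exact Or.inr (base x0 D h.subset hne)
  | succ n ih =>
      intro free hcard x0 D h hsym
      rcases Set.eq_empty_or_nonempty D with rfl | ⟨d0, hd0⟩
      · exact Or.inl rfl
      rcases Finset.eq_empty_or_nonempty free with rfl | ⟨i, hi⟩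
      · exact Or.inr (base x0 D h.subset ⟨d0, hd0⟩)
      have hd0F : d0 ∈ cubeFace free x0 := h.subset hd0
      have hmem : ∀ z ∈ D, flipFace free x0 z ∈ D := by
        intro z hz
        rw [← hsym]
        exact Set.mem_image_of_mem _ hz
      -- the pair set
      set E := pairSet i free x0 D with hEdef
      have hE : MCF (free.erase i) x0 E := mcf_pairSet h hi
      -- `E` is invariant under the antipodal map of the half-face
      have hEF' : E ⊆ cubeFace (free.erase i) x0 := fun x hx => hx.1
      have keyτ : ∀ x ∈ E, flipFace (free.erase i) x0 x ∈ E ∧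
          flipFace (free.erase i) x0 x = flipFace free x0 (flip i x) ∧
          flip i (flipFace (free.erase i) x0 x) = flipFace free x0 x := by
        intro x hx
        obtain ⟨hxF', hxD, hxD2⟩ := hx
        have hxF : x ∈ cubeFace free x0 :=
          cubeFace_subset (Finset.erase_subset i free) (self_mem_cubeFace _ _) hxF'
        have hfxF : flip i x ∈ cubeFace free x0 := flip_mem_cubeFace hi hxF
        have e1 : flipFace (free.erase i) x0 x = flipFace free x0 (flip i x) := by
          rw [flipFace_apply hxF', flipFace_apply hfxF]
          funext j
          by_cases hji : j = i
          · subst hji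
            have h1 : j ∉ free.erase j := by simp
            rw [if_neg h1, if_pos hi, flip_same, Bool.not_not]
          · have h2 : j ∈ free.erase i ↔ j ∈ free := by
              simp [Finset.mem_erase, hji]
            rw [flip_ne_of_ne hji]
            by_cases hjf : j ∈ free
            · rw [if_pos (h2.mpr hjf), if_pos hjf]
            · rw [if_neg (fun hh => hjf (h2.mp hh)), if_neg hjf]
        have e2 : flip i (flipFace (free.erase i) x0 x) = flipFace free x0 x := by
          rw [flipFace_apply hxF', flipFace_apply hxF]
          funext j
          by_cases hji : j = i
          · subst hji
            have h1 : j ∉ free.erase j := by simp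
            rw [flip_same]
            show (!(if j ∈ free.erase j then !(x j) else x j)) = _
            rw [if_neg h1, if_pos hi]
          · have h2 : j ∈ free.erase i ↔ j ∈ free := by
              simp [Finset.mem_erase, hji]
            rw [flip_ne_of_ne hji]
            show (if j ∈ free.erase i then !(x j) else x j) = _
            by_cases hjf : j ∈ free
            · rw [if_pos (h2.mpr hjf), if_pos hjf]
            · rw [if_neg (fun hh => hjf (h2.mp hh)), if_neg hjf]
        refine ⟨⟨flipFace_mem hxF', ?_, ?_⟩, e1, e2⟩
        · rw [e1]
          exact hmem _ hxD2
        · rw [e2]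
          exact hmem _ hxD
      have hsymE : flipFace (free.erase i) x0 '' E = E := by
        apply Set.Subset.antisymm
        · rintro _ ⟨x, hx, rfl⟩
          exact (keyτ x hx).1
        · intro x hx
          refine ⟨flipFace (free.erase i) x0 x, (keyτ x hx).1, ?_⟩
          exact flipFace_flipFace (hEF' hx)
      have hcard' : (free.erase i).card ≤ n := by
        have := Finset.card_erase_of_mem hi
        omega
      rcases ih (free.erase i) hcard' x0 E hE hsymE with hE0 | hEfull
      · -- no `i`-pair at all : contradiction with connectivity and symmetry
        exfalso
        have hfd0 : flipFace free x0 d0 ∈ D := hmem d0 hd0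
        have hconn := (h.faceConds free (le_refl free) x0 (self_mem_cubeFace _ _)).1
        have hreach := hconn d0 ⟨hd0, hd0F⟩ (flipFace free x0 d0) ⟨hfd0, flipFace_mem hd0F⟩
        set T : Set (Fin d → Bool) := {x | x ∈ D ∧ x ∈ cubeFace free x0 ∧ x i = d0 i}
          with hTdef
        have trap : ∀ t ∈ T, ∀ z ∈ (D ∩ cubeFace free x0), cubeAdj t z → z ∈ T := by
          intro t ht z hz hadj
          refine ⟨hz.1, hz.2, ?_⟩
          obtain ⟨k, rfl⟩ := eq_flip_of_cubeAdj hadj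
          by_cases hki : k = i
          · subst hki
            exfalso
            set r : Fin d → Bool := if t k = x0 k then t else flip k t with hrdef
            have hrE : r ∈ E := by
              have hrD : r ∈ D ∧ flip k r ∈ D := by
                by_cases htk : t k = x0 k
                · rw [hrdef, if_pos htk]
                  exact ⟨ht.1, hz.1⟩
                · rw [hrdef, if_neg htk]
                  refine ⟨hz.1, ?_⟩
                  rw [flip_flip]
                  exact ht.1
              refine ⟨?_, hrD.1, hrD.2⟩
              intro j hj
              by_cases hji : j = k
              · subst hji
                by_cases htk : t j = x0 j
                · rw [hrdef, if_pos htk]; exact htk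
                · rw [hrdef, if_neg htk, flip_same]
                  revert htk
                  cases t j <;> cases x0 j <;> simp
              · have hjfree : j ∉ free := by
                  intro hjf
                  exact hj (Finset.mem_erase.mpr ⟨hji, hjf⟩)
                have hrj : r j = t j := by
                  by_cases htk : t k = x0 k
                  · rw [hrdef, if_pos htk]
                  · rw [hrdef, if_neg htk]
                    exact flip_ne_of_ne hji t
                rw [hrj]
                exact ht.2.1 j hjfree
            rw [hE0] at hrE
            exact Set.notMem_empty r hrE
          · rw [flip_ne_of_ne (fun hh => hki hh.symm)]
            exact ht.2.2
        have hfin : flipFace free x0 d0 ∈ T :=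
          reach_trap trap hreach ⟨hd0, hd0F, rfl⟩
        have heq : flipFace free x0 d0 i = !(d0 i) := flipFace_apply_mem hd0F hi
        have h22 := hfin.2.2
        rw [heq] at h22
        exact Bool.not_ne_self (d0 i) h22
      · -- every vertex carries a pair : `D` is the whole face
        right
        apply Set.Subset.antisymm h.subset
        intro x hxF
        by_cases hxi : x i = x0 i
        · have hxF' : x ∈ cubeFace (free.erase i) x0 := by
            intro j hj
            by_cases hji : j = i
            · subst hji; exact hxi
            · exact hxF j (fun hh => hj (Finset.mem_erase.mpr ⟨hji, hh⟩))
          rw [← hEfull] at hxF'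
          exact hxF'.2.1
        · have hxF' : flip i x ∈ cubeFace (free.erase i) x0 := by
            intro j hj
            by_cases hji : j = i
            · subst hji
              rw [flip_same]
              revert hxi
              cases x j <;> cases x0 j <;> simp
            · rw [flip_ne_of_ne hji]
              exact hxF j (fun hh => hj (Finset.mem_erase.mpr ⟨hji, hh⟩))
          rw [← hEfull] at hxF'
          have := hxF'.2.2
          rwa [flip_flip] at this
end MCAux

/-- Every multi-connected subset of the hypercube `{-1,1}^d` is lopsided. -/
theorem multiConnected_lopsided {d : ℕ} (C : Set (Fin d → Bool))
    (hC : MultiConnected C) : Lopsided C := by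
  intro free x0 hsym
  have hmcf := MCAux.multiConnected_restrict hC free x0
  have hmemf : ∀ z ∈ C, flipFace free x0 z ∈ C := by
    intro z hz
    rw [← hsym]
    exact Set.mem_image_of_mem _ hz
  have hsymD : flipFace free x0 '' (C ∩ cubeFace free x0) = C ∩ cubeFace free x0 := by
    apply Set.Subset.antisymm
    · rintro _ ⟨x, ⟨hxC, hxF⟩, rfl⟩
      exact ⟨hmemf x hxC, MCAux.flipFace_mem hxF⟩
    · intro x hx
      exact ⟨flipFace free x0 x, ⟨hmemf x hx.1, MCAux.flipFace_mem hx.2⟩,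
        MCAux.flipFace_flipFace hx.2⟩
  rcases MCAux.mcf_symm_trivial free.card free le_rfl x0 (C ∩ cubeFace free x0)
      hmcf hsymD with h0 | hfull
  · exact Or.inl h0
  · right
    intro x hx
    rw [← hfull] at hx
    exact hx.1
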